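/- Let U be a Hausdorff locally convex ordered topological vector space and C ⊆ U a closed convex cone with -U₊ ⊆ C and C ∩ U₊ = {0}. Then for each x ∈ U₊ \ {0} there exists a continuous linear functional x' on U which is positive (x'(U₊) ⊆ ℝ₊), satisfies x'(y) ≤ 0 for all y ∈ C, and x'(x) > 0. -/

import Mathlib

/-- In a Hausdorff locally convex ordered topological vector space, if `C` is a closed
convex cone with `-U₊ ⊆ C` and `C ∩ U₊ = {0}`, then for each `x ∈ U₊ \ {0}` there is a
positive continuous linear functional `x'` with `x' ≤ 0` on `C` and `x'(x) > 0`. -/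
theorem separating_functional_exists {U : Type*} [AddCommGroup U] [PartialOrder U]
    [CovariantClass U U (· + ·) (· ≤ ·)] [Module ℝ U]
    [TopologicalSpace U] [IsTopologicalAddGroup U] [ContinuousSMul ℝ U]
    [LocallyConvexSpace ℝ U] [T2Space U]
    (hclosedCone : IsClosed {x : U | 0 ≤ x})
    (C : Set U) (hCclosed : IsClosed C) (hCconv : Convex ℝ C)
    (hCcone : ∀ t : ℝ, 0 ≤ t → ∀ y ∈ C, t • y ∈ C)
    (hneg : ∀ z : U, 0 ≤ z → -z ∈ C)
    (hCpos : ∀ y ∈ C, 0 ≤ y → y = 0)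
    (x : U) (hx : 0 ≤ x) (hx0 : x ≠ 0) :
    ∃ x' : U →L[ℝ] ℝ, (∀ z : U, 0 ≤ z → 0 ≤ x' z) ∧ (∀ y ∈ C, x' y ≤ 0) ∧ 0 < x' x := by
  have hxC : x ∉ C := fun hxC => hx0 (hCpos x hxC hx)
  obtain ⟨f, u, hfu, hux⟩ := geometric_hahn_banach_closed_point hCconv hCclosed hxC
  have h0C : (0 : U) ∈ C := by simpa using hneg 0 le_rfl
  have hu : 0 < u := by simpa using hfu 0 h0C
  -- for y ∈ C, f y ≤ 0
  have hCle : ∀ y ∈ C, f y ≤ 0 := by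
    intro y hy
    by_contra h
    push_neg at h
    have := hfu ((u / f y + 1) • y) (hCcone _ (by positivity) y hy)
    rw [map_smul, smul_eq_mul] at this
    rw [add_mul, div_mul_cancel₀ _ h.ne', one_mul] at this
    linarith
  refine ⟨f, ?_, hCle, hu.trans hux⟩
  intro z hz
  have := hCle (-z) (hneg z hz)
  simpa [neg_nonpos] using this
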